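/- Let P be a set of n points in the plane in general position (n even) with spread Δ (the ratio of the maximum to the minimum pairwise distance in P). Then for every perfect matching M on P there exists a sequence of at most (2/(2−√2))·n·Δ flips transforming M into a plane perfect matching; in particular f(M) ≤ 2nΔ/(2−√2). -/

import Mathlib

open EuclideanGeometry Real

noncomputable section

/-- Points of the Euclidean plane. -/
abbrev Pt : Type := EuclideanSpace ℝ (Fin 2)

/-- Two closed segments `ab` and `cd` on four distinct points *cross* if their open
segments have a common point. -/
def SegCross (a b c d : Pt) : Prop :=
  a ≠ b ∧ a ≠ c ∧ a ≠ d ∧ b ≠ c ∧ b ≠ d ∧ c ≠ d ∧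
    (openSegment ℝ a b ∩ openSegment ℝ c d).Nonempty

/-- `M` is a perfect matching on the point set `P`: a set of non-degenerate unordered
pairs (edges) of points of `P` such that every point of `P` lies in exactly one edge. -/
def IsPM (P : Finset Pt) (M : Set (Sym2 Pt)) : Prop :=
  (∀ e ∈ M, ¬ e.IsDiag) ∧
  (∀ e ∈ M, ∀ p ∈ e, p ∈ P) ∧
  (∀ p ∈ P, ∃! e, e ∈ M ∧ p ∈ e)

/-- Two unordered edges cross. -/
def EdgeCross (e f : Sym2 Pt) : Prop :=
  ∃ a b c d : Pt, e = s(a, b) ∧ f = s(c, d) ∧ SegCross a b c d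

/-- A matching is plane if no two of its edges cross. -/
def PlaneM (M : Set (Sym2 Pt)) : Prop :=
  ∀ e ∈ M, ∀ f ∈ M, ¬ EdgeCross e f

/-- `M'` is obtained from `M` by a single flip: two crossing edges `{a,b}`, `{c,d}`
are replaced by `{a,c}`, `{b,d}` or by `{a,d}`, `{b,c}`. -/
def Flip (M M' : Set (Sym2 Pt)) : Prop :=
  ∃ a b c d : Pt, s(a, b) ∈ M ∧ s(c, d) ∈ M ∧ SegCross a b c d ∧
    (M' = (M \ {s(a, b), s(c, d)}) ∪ {s(a, c), s(b, d)} ∨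
     M' = (M \ {s(a, b), s(c, d)}) ∪ {s(a, d), s(b, c)})

/-- `M` can be transformed into a plane matching by at most `k` flips. -/
def FlipsToPlane (M : Set (Sym2 Pt)) (k : ℕ) : Prop :=
  ∃ (j : ℕ) (g : ℕ → Set (Sym2 Pt)), j ≤ k ∧ g 0 = M ∧
    (∀ i < j, Flip (g i) (g (i + 1))) ∧ PlaneM (g j)

/-- No three distinct points of `P` are collinear. -/
def GenPos (P : Set Pt) : Prop :=
  ∀ p ∈ P, ∀ q ∈ P, ∀ r ∈ P, p ≠ q → p ≠ r → q ≠ r →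
    ¬ Collinear ℝ ({p, q, r} : Set Pt)

/-- `P` is in convex position: no point lies in the convex hull of the others. -/
def ConvexPos (P : Set Pt) : Prop :=
  ∀ p ∈ P, p ∉ convexHull ℝ (P \ {p})

/-! ### Auxiliary material for the proof -/

open scoped RealInnerProductSpace

local instance : DecidableEq Pt := Classical.decEq _

/-- The length of an unordered edge. -/
def len : Sym2 Pt → ℝ := Sym2.lift ⟨dist, fun x y => dist_comm x y⟩

@[simp] lemma len_mk (p q : Pt) : len s(p, q) = dist p q := rfl

lemma len_nonneg (e : Sym2 Pt) : 0 ≤ len e := by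
  induction e using Sym2.ind with
  | _ p q => simpa using dist_nonneg

lemma scalar_aux (s t : ℝ) (hs : 0 ≤ s) (ht : 0 ≤ t) :
    Real.sqrt (s^2 + t^2) ≤ s + t - (2 - Real.sqrt 2) * min s t := by
  have h2 : Real.sqrt 2 ^ 2 = 2 := Real.sq_sqrt (by norm_num)
  have h1 : 1 ≤ Real.sqrt 2 := by nlinarith [Real.sqrt_nonneg 2]
  have key : ∀ u v : ℝ, 0 ≤ u → u ≤ v →
      Real.sqrt (u^2 + v^2) ≤ u + v - (2 - Real.sqrt 2) * u := by
    intro u v hu huv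
    have : u^2 + v^2 ≤ (u + v - (2 - Real.sqrt 2) * u)^2 := by
      nlinarith [mul_le_mul_of_nonneg_left huv hu]
    calc Real.sqrt (u^2+v^2) ≤ Real.sqrt ((u + v - (2 - Real.sqrt 2) * u)^2) :=
          Real.sqrt_le_sqrt this
      _ = _ := by rw [Real.sqrt_sq (by nlinarith)]
  rcases le_total s t with h | h
  · rw [min_eq_left h]; exact key s t hs h
  · rw [min_eq_right h]
    have := key t s ht h
    calc Real.sqrt (s^2+t^2) = Real.sqrt (t^2+s^2) := by ring_nf
      _ ≤ _ := by linarith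

lemma auxA (a b c d x : Pt) (δ : ℝ)
    (hxab : x ∈ openSegment ℝ a b) (hxcd : x ∈ openSegment ℝ c d)
    (h1 : 0 ≤ ⟪a - x, c - x⟫) (h2 : 0 ≤ ⟪b - x, d - x⟫)
    (hab : δ ≤ dist a b) (had : δ ≤ dist a d) (hcb : δ ≤ dist c b) (hcd : δ ≤ dist c d) :
    dist a c + dist b d + (2 - Real.sqrt 2) * δ ≤ dist a b + dist c d := by
  have h2' : Real.sqrt 2 ≤ 2 := by
    nlinarith [Real.sq_sqrt (by norm_num : (2:ℝ) ≥ 0), Real.sqrt_nonneg 2]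
  have hdab : dist a x + dist x b = dist a b :=
    dist_add_dist_of_mem_segment (openSegment_subset_segment ℝ a b hxab)
  have hdcd : dist c x + dist x d = dist c d :=
    dist_add_dist_of_mem_segment (openSegment_subset_segment ℝ c d hxcd)
  have keydist : ∀ p q : Pt, 0 ≤ ⟪p - x, q - x⟫ →
      dist p q ≤ Real.sqrt (dist p x ^ 2 + dist q x ^ 2) := by
    intro p q hpq
    have hnorm : dist p q ^ 2 ≤ dist p x ^2 + dist q x ^2 := by
      have : p - q = (p - x) - (q - x) := by abel
      rw [dist_eq_norm, this, dist_eq_norm p x, dist_eq_norm q x]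
      rw [norm_sub_sq_real]
      linarith
    calc dist p q = Real.sqrt (dist p q ^ 2) := (Real.sqrt_sq dist_nonneg).symm
      _ ≤ _ := Real.sqrt_le_sqrt hnorm
  have hac := (keydist a c h1).trans (scalar_aux _ _ dist_nonneg dist_nonneg)
  have hbd := (keydist b d h2).trans (scalar_aux _ _ dist_nonneg dist_nonneg)
  have hmin : δ ≤ min (dist a x) (dist c x) + min (dist b x) (dist d x) := by
    have t1 := dist_triangle a x d
    have t2 := dist_triangle c x b
    have e1 : dist x b = dist b x := dist_comm x b
    have e2 : dist x d = dist d x := dist_comm x d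
    rcases le_total (dist a x) (dist c x) with h | h <;>
      rcases le_total (dist b x) (dist d x) with h' | h' <;>
      simp only [min_eq_left, min_eq_right, h, h'] <;> linarith
  have e1 : dist x b = dist b x := dist_comm x b
  have e2 : dist x d = dist d x := dist_comm x d
  nlinarith [hac, hbd, hmin]

lemma cross_gain (a b c d : Pt) (δ : ℝ) (hsc : SegCross a b c d)
    (h1 : δ ≤ dist a b) (h2 : δ ≤ dist a c) (h3 : δ ≤ dist a d)
    (h4 : δ ≤ dist b c) (h5 : δ ≤ dist b d) (h6 : δ ≤ dist c d) :
    dist a c + dist b d + (2 - Real.sqrt 2) * δ ≤ dist a b + dist c d ∨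
    dist a d + dist b c + (2 - Real.sqrt 2) * δ ≤ dist a b + dist c d := by
  obtain ⟨-, -, -, -, -, -, x, hxab, hxcd⟩ := hsc
  obtain ⟨p, q, hp, hq, hpq, hxe⟩ := hxab
  obtain ⟨u, v, hu, hv, huv, hxe'⟩ := hxcd
  have hbx : b - x = (p/q) • (x - a) := by
    rw [← hxe]
    have : p = 1 - q := by linarith
    subst this
    match_scalars <;> field_simp <;> ring
  have hdx : d - x = (u/v) • (x - c) := by
    rw [← hxe']
    have : u = 1 - v := by linarith
    subst this
    match_scalars <;> field_simp <;> ring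
  have hax : a - x = -(x - a) := by abel
  have hcx : c - x = -(x - c) := by abel
  set I := ⟪x - a, x - c⟫ with hI
  have ha_c : ⟪a - x, c - x⟫ = I := by rw [hax, hcx, inner_neg_neg]
  have ha_d : ⟪a - x, d - x⟫ = -((u/v) * I) := by
    rw [hax, hdx, inner_neg_left, real_inner_smul_right]
  have hb_c : ⟪b - x, c - x⟫ = -((p/q) * I) := by
    rw [hcx, hbx, inner_neg_right, real_inner_smul_left]
  have hb_d : ⟪b - x, d - x⟫ = (p/q) * ((u/v) * I) := by
    rw [hbx, hdx, real_inner_smul_left, real_inner_smul_right]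
  have hpq' : 0 < p/q := div_pos hp hq
  have huv' : 0 < u/v := div_pos hu hv
  have hxab' : x ∈ openSegment ℝ a b := ⟨p, q, hp, hq, hpq, hxe⟩
  have hxcd' : x ∈ openSegment ℝ c d := ⟨u, v, hu, hv, huv, hxe'⟩
  rcases le_or_gt 0 I with hsign | hsign
  · left
    exact auxA a b c d x δ hxab' hxcd' (by rw [ha_c]; exact hsign)
      (by rw [hb_d]; positivity) h1 h3 (by rwa [dist_comm]) h6
  · right
    have hxdc : x ∈ openSegment ℝ d c := by rwa [openSegment_symm]
    have := auxA a b d c x δ hxab' hxdc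
      (by rw [ha_d]; nlinarith) (by rw [hb_c]; nlinarith)
      h1 h2 (by rwa [dist_comm]) (by rwa [dist_comm])
    rwa [dist_comm d c] at this

lemma pm_uni {P : Finset Pt} {M : Set (Sym2 Pt)} (hPM : IsPM P M) {p : Pt} (hp : p ∈ P)
    {e e' : Sym2 Pt} (he : e ∈ M) (hpe : p ∈ e) (he' : e' ∈ M) (hpe' : p ∈ e') : e = e' := by
  obtain ⟨f, -, hf⟩ := hPM.2.2 p hp
  rw [hf e ⟨he, hpe⟩, hf e' ⟨he', hpe'⟩]

lemma pm_finite {P : Finset Pt} {M : Set (Sym2 Pt)} (hPM : IsPM P M) : M.Finite := by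
  apply Set.Finite.subset (Finset.finite_toSet ((P ×ˢ P).image (fun pq => s(pq.1, pq.2))))
  intro e he
  induction e using Sym2.ind with
  | _ p q =>
    refine Finset.mem_coe.2 (Finset.mem_image.2 ⟨(p, q), Finset.mem_product.2 ⟨?_, ?_⟩, rfl⟩)
    · exact hPM.2.1 _ he p (Sym2.mem_mk_left p q)
    · exact hPM.2.1 _ he q (Sym2.mem_mk_right p q)

lemma pm_card {P : Finset Pt} {F : Finset (Sym2 Pt)} (hPM : IsPM P ↑F) :
    F.card ≤ P.card := by
  apply Finset.card_le_card_of_injOn (fun e => e.out.1)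
  · intro e he
    exact hPM.2.1 e (Finset.mem_coe.2 he) _ (Sym2.out_fst_mem e)
  · intro e he e' he' h
    have hp : e.out.1 ∈ P := hPM.2.1 e (Finset.mem_coe.2 he) _ (Sym2.out_fst_mem e)
    have m2 : e.out.1 ∈ e' := by
      have h' : e.out.1 = e'.out.1 := h
      rw [h']; exact Sym2.out_fst_mem e'
    exact pm_uni hPM hp (Finset.mem_coe.2 he) (Sym2.out_fst_mem e)
      (Finset.mem_coe.2 he') m2

lemma flip_one {P : Finset Pt} {F : Finset (Sym2 Pt)} (hPM : IsPM P ↑F)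
    (a b c d : Pt) (hab : a ≠ b) (hac : a ≠ c) (had : a ≠ d) (hbc : b ≠ c) (hbd : b ≠ d)
    (hcd : c ≠ d) (he1 : s(a,b) ∈ F) (he2 : s(c,d) ∈ F) :
    IsPM P ↑((F \ {s(a,b), s(c,d)}) ∪ {s(a,c), s(b,d)}) ∧
    ∑ e ∈ ((F \ {s(a,b), s(c,d)}) ∪ {s(a,c), s(b,d)}), len e
      = ∑ e ∈ F, len e - dist a b - dist c d + dist a c + dist b d := by
  have haP : a ∈ P := hPM.2.1 _ (Finset.mem_coe.2 he1) a (Sym2.mem_mk_left a b)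
  have hbP : b ∈ P := hPM.2.1 _ (Finset.mem_coe.2 he1) b (Sym2.mem_mk_right a b)
  have hcP : c ∈ P := hPM.2.1 _ (Finset.mem_coe.2 he2) c (Sym2.mem_mk_left c d)
  have hdP : d ∈ P := hPM.2.1 _ (Finset.mem_coe.2 he2) d (Sym2.mem_mk_right c d)
  have e1ne2 : s(a,b) ≠ s(c,d) := by simp [Sym2.eq_iff]; tauto
  have g1ng2 : s(a,c) ≠ s(b,d) := by simp [Sym2.eq_iff]; tauto
  have hg1 : s(a,c) ∉ F := by
    intro h
    have := pm_uni hPM haP (Finset.mem_coe.2 he1) (Sym2.mem_mk_left a b)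
      (Finset.mem_coe.2 h) (Sym2.mem_mk_left a c)
    simp [Sym2.eq_iff] at this; tauto
  have hg2 : s(b,d) ∉ F := by
    intro h
    have := pm_uni hPM hbP (Finset.mem_coe.2 he1) (Sym2.mem_mk_right a b)
      (Finset.mem_coe.2 h) (Sym2.mem_mk_left b d)
    simp [Sym2.eq_iff] at this; tauto
  set F' := (F \ {s(a,b), s(c,d)}) ∪ {s(a,c), s(b,d)} with hF'
  have hmem : ∀ e, e ∈ F' ↔ ((e ∈ F ∧ e ≠ s(a,b) ∧ e ≠ s(c,d)) ∨ e = s(a,c) ∨ e = s(b,d)) := by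
    intro e
    simp [hF', Finset.mem_union, Finset.mem_sdiff, Finset.mem_insert, Finset.mem_singleton]
    tauto
  constructor
  · refine ⟨?_, ?_, ?_⟩
    · intro e he
      rcases (hmem e).1 (Finset.mem_coe.1 he) with ⟨heF, -, -⟩ | h | h
      · exact hPM.1 e (Finset.mem_coe.2 heF)
      · subst h; simpa [Sym2.mk_isDiag_iff] using hac
      · subst h; simpa [Sym2.mk_isDiag_iff] using hbd
    · intro e he p hpe
      rcases (hmem e).1 (Finset.mem_coe.1 he) with ⟨heF, -, -⟩ | h | h
      · exact hPM.2.1 e (Finset.mem_coe.2 heF) p hpe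
      · subst h; rcases Sym2.mem_iff.1 hpe with h | h <;> subst h <;> assumption
      · subst h; rcases Sym2.mem_iff.1 hpe with h | h <;> subst h <;> assumption
    · intro p hp
      obtain ⟨e, ⟨heF, hpe⟩, -⟩ := hPM.2.2 p hp
      have huniF : ∀ e' ∈ F, p ∈ e' → e' = e :=
        fun e' he' hpe' => (pm_uni hPM hp heF hpe (Finset.mem_coe.2 he') hpe').symm
      by_cases hpa : p = a
      · refine ⟨s(a,c), ⟨Finset.mem_coe.2 ((hmem _).2 (Or.inr (Or.inl rfl))),
            by rw [hpa]; exact Sym2.mem_mk_left a c⟩, ?_⟩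
        rintro e' ⟨he', hpe'⟩
        rcases (hmem e').1 (Finset.mem_coe.1 he') with ⟨heF', hne1, -⟩ | h | h
        · exfalso
          have := pm_uni hPM hp (Finset.mem_coe.2 heF') hpe'
            (Finset.mem_coe.2 he1) (by rw [hpa]; exact Sym2.mem_mk_left a b)
          exact hne1 this
        · exact h
        · exfalso; subst h; rcases Sym2.mem_iff.1 hpe' with h | h
          · exact hab (hpa.symm.trans h)
          · exact had (hpa.symm.trans h)
      · by_cases hpb : p = b
        · refine ⟨s(b,d), ⟨Finset.mem_coe.2 ((hmem _).2 (Or.inr (Or.inr rfl))),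
              by rw [hpb]; exact Sym2.mem_mk_left b d⟩, ?_⟩
          rintro e' ⟨he', hpe'⟩
          rcases (hmem e').1 (Finset.mem_coe.1 he') with ⟨heF', hne1, -⟩ | h | h
          · exfalso
            exact hne1 (pm_uni hPM hp (Finset.mem_coe.2 heF') hpe'
              (Finset.mem_coe.2 he1) (by rw [hpb]; exact Sym2.mem_mk_right a b))
          · exfalso; subst h; rcases Sym2.mem_iff.1 hpe' with h | h
            · exact hab (h.symm.trans hpb)
            · exact hbc (hpb.symm.trans h)
          · exact h
        · by_cases hpc : p = c
          · refine ⟨s(a,c), ⟨Finset.mem_coe.2 ((hmem _).2 (Or.inr (Or.inl rfl))),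
                by rw [hpc]; exact Sym2.mem_mk_right a c⟩, ?_⟩
            rintro e' ⟨he', hpe'⟩
            rcases (hmem e').1 (Finset.mem_coe.1 he') with ⟨heF', -, hne2⟩ | h | h
            · exfalso
              exact hne2 (pm_uni hPM hp (Finset.mem_coe.2 heF') hpe'
                (Finset.mem_coe.2 he2) (by rw [hpc]; exact Sym2.mem_mk_left c d))
            · exact h
            · exfalso; subst h; rcases Sym2.mem_iff.1 hpe' with h | h
              · exact hbc (h.symm.trans hpc)
              · exact hcd (hpc.symm.trans h)
          · by_cases hpd : p = d
            · refine ⟨s(b,d), ⟨Finset.mem_coe.2 ((hmem _).2 (Or.inr (Or.inr rfl))),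
                  by rw [hpd]; exact Sym2.mem_mk_right b d⟩, ?_⟩
              rintro e' ⟨he', hpe'⟩
              rcases (hmem e').1 (Finset.mem_coe.1 he') with ⟨heF', -, hne2⟩ | h | h
              · exfalso
                exact hne2 (pm_uni hPM hp (Finset.mem_coe.2 heF') hpe'
                  (Finset.mem_coe.2 he2) (by rw [hpd]; exact Sym2.mem_mk_right c d))
              · exfalso; subst h; rcases Sym2.mem_iff.1 hpe' with h | h
                · exact had (h.symm.trans hpd)
                · exact hcd (h.symm.trans hpd)
              · exact h
            · have hene1 : e ≠ s(a,b) := by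
                intro h; subst h; rcases Sym2.mem_iff.1 hpe with h | h
                · exact hpa h
                · exact hpb h
              have hene2 : e ≠ s(c,d) := by
                intro h; subst h; rcases Sym2.mem_iff.1 hpe with h | h
                · exact hpc h
                · exact hpd h
              refine ⟨e, ⟨Finset.mem_coe.2 ((hmem e).2 (Or.inl ⟨heF, hene1, hene2⟩)),
                hpe⟩, ?_⟩
              rintro e' ⟨he', hpe'⟩
              rcases (hmem e').1 (Finset.mem_coe.1 he') with ⟨heF', -, -⟩ | h | h
              · exact huniF e' heF' hpe'
              · exfalso; subst h; rcases Sym2.mem_iff.1 hpe' with h | h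
                · exact hpa h
                · exact hpc h
              · exfalso; subst h; rcases Sym2.mem_iff.1 hpe' with h | h
                · exact hpb h
                · exact hpd h
  · have hsub : ({s(a,b), s(c,d)} : Finset (Sym2 Pt)) ⊆ F := by
      intro e he
      rcases Finset.mem_insert.1 he with h | h
      · subst h; exact he1
      · rw [Finset.mem_singleton.1 h]; exact he2
    have hdisj : Disjoint (F \ {s(a,b), s(c,d)}) ({s(a,c), s(b,d)} : Finset (Sym2 Pt)) := by
      rw [Finset.disjoint_right]
      intro e he
      rcases Finset.mem_insert.1 he with h | h
      · subst h; intro hmem'; exact hg1 (Finset.mem_sdiff.1 hmem').1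
      · rw [Finset.mem_singleton.1 h]; intro hmem'; exact hg2 (Finset.mem_sdiff.1 hmem').1
    rw [hF', Finset.sum_union hdisj, Finset.sum_sdiff_eq_sub hsub,
      Finset.sum_pair e1ne2, Finset.sum_pair g1ng2]
    simp only [len_mk]
    ring

lemma flip_step {P : Finset Pt} {F : Finset (Sym2 Pt)} (hPM : IsPM P ↑F) (δ : ℝ)
    (hδ : ∀ p ∈ P, ∀ q ∈ P, p ≠ q → δ ≤ dist p q) (hnp : ¬ PlaneM ↑F) :
    ∃ F' : Finset (Sym2 Pt), Flip ↑F ↑F' ∧ IsPM P ↑F' ∧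
      ∑ e ∈ F', len e ≤ ∑ e ∈ F, len e - (2 - Real.sqrt 2) * δ := by
  rw [PlaneM] at hnp; push_neg at hnp
  obtain ⟨e, he, f, hf, hef⟩ := hnp
  obtain ⟨a, b, c, d, rfl, rfl, hsc⟩ := hef
  have hab := hsc.1
  have hac := hsc.2.1
  have had := hsc.2.2.1
  have hbc := hsc.2.2.2.1
  have hbd := hsc.2.2.2.2.1
  have hcd := hsc.2.2.2.2.2.1
  have he1 : s(a,b) ∈ F := Finset.mem_coe.1 he
  have he2 : s(c,d) ∈ F := Finset.mem_coe.1 hf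
  have haP : a ∈ P := hPM.2.1 _ he a (Sym2.mem_mk_left a b)
  have hbP : b ∈ P := hPM.2.1 _ he b (Sym2.mem_mk_right a b)
  have hcP : c ∈ P := hPM.2.1 _ hf c (Sym2.mem_mk_left c d)
  have hdP : d ∈ P := hPM.2.1 _ hf d (Sym2.mem_mk_right c d)
  rcases cross_gain a b c d δ hsc (hδ a haP b hbP hab) (hδ a haP c hcP hac)
      (hδ a haP d hdP had) (hδ b hbP c hcP hbc) (hδ b hbP d hdP hbd)
      (hδ c hcP d hdP hcd) with hg | hg
  · obtain ⟨hPM', hsum⟩ := flip_one hPM a b c d hab hac had hbc hbd hcd he1 he2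
    refine ⟨_, ⟨a, b, c, d, he, hf, hsc, Or.inl ?_⟩, hPM', by rw [hsum]; linarith⟩
    push_cast [Finset.coe_union, Finset.coe_sdiff, Finset.coe_insert, Finset.coe_singleton]
    rfl
  · have he2' : s(d,c) ∈ F := by rw [Sym2.eq_swap]; exact he2
    obtain ⟨hPM', hsum⟩ := flip_one hPM a b d c hab had hac hbd hbc (Ne.symm hcd) he1 he2'
    have hdc : dist d c = dist c d := dist_comm d c
    refine ⟨_, ⟨a, b, c, d, he, hf, hsc, Or.inr ?_⟩, hPM', by rw [hsum]; linarith⟩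
    have hsw : s(d,c) = s(c,d) := Sym2.eq_swap
    rw [hsw]
    push_cast [Finset.coe_union, Finset.coe_sdiff, Finset.coe_insert, Finset.coe_singleton]
    rfl

lemma flipsToPlane_zero {M : Set (Sym2 Pt)} (h : PlaneM M) : FlipsToPlane M 0 :=
  ⟨0, fun _ => M, le_rfl, rfl, fun i hi => absurd hi (by omega), h⟩

lemma toPlane (P : Finset Pt) (δ : ℝ)
    (hδ : ∀ p ∈ P, ∀ q ∈ P, p ≠ q → δ ≤ dist p q) :
    ∀ k : ℕ, ∀ F : Finset (Sym2 Pt), IsPM P ↑F →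
      (∑ e ∈ F, len e) < (2 - Real.sqrt 2) * δ * (k + 1) → FlipsToPlane ↑F k := by
  intro k
  induction k with
  | zero =>
    intro F hPM hsum
    by_cases hp : PlaneM ↑F
    · exact flipsToPlane_zero hp
    · exfalso
      obtain ⟨F', -, -, hsum'⟩ := flip_step hPM δ hδ hp
      have h0 : (0:ℝ) ≤ ∑ e ∈ F', len e := Finset.sum_nonneg fun e _ => len_nonneg e
      push_cast at hsum
      linarith
  | succ k ih =>
    intro F hPM hsum
    by_cases hp : PlaneM ↑F
    · obtain ⟨j, g, hj, h0, h1, h2⟩ := flipsToPlane_zero hp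
      exact ⟨j, g, hj.trans (Nat.zero_le _), h0, h1, h2⟩
    · obtain ⟨F', hflip, hPM', hsum'⟩ := flip_step hPM δ hδ hp
      have hlt : (∑ e ∈ F', len e) < (2 - Real.sqrt 2) * δ * (k + 1) := by
        push_cast at hsum ⊢
        linarith
      obtain ⟨j, g, hj, hg0, hgf, hgp⟩ := ih F' hPM' hlt
      refine ⟨j + 1, fun i => if i = 0 then ↑F else g (i - 1), by omega, by simp, ?_, ?_⟩
      · intro i hi
        rcases Nat.eq_zero_or_pos i with h | h
        · subst h
          simp only [if_pos rfl, if_neg (Nat.one_ne_zero)]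
          rw [hg0]
          exact hflip
        · have h1' : i ≠ 0 := Nat.pos_iff_ne_zero.1 h
          have h2' : i + 1 ≠ 0 := Nat.succ_ne_zero i
          simp only [if_neg h1', if_neg h2']
          have : i - 1 + 1 = i + 1 - 1 := by omega
          have hlt' : i - 1 < j := by omega
          have := hgf (i - 1) hlt'
          have heq : i - 1 + 1 = i := by omega
          rwa [heq] at this
      · simp only [if_neg (Nat.succ_ne_zero j)]
        have heq : j + 1 - 1 = j := by omega
        rw [heq]
        exact hgp

/-- For every perfect matching `M` on a set `P` of `n` points in
general position with spread `Δ` (the ratio of the maximum to the minimum pairwise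
distance in `P`), there is a sequence of at most `(2/(2-√2))·n·Δ` flips transforming
`M` into a plane perfect matching. -/
theorem stmt0 (n : ℕ) (hn : Even n) (P : Finset Pt) (hcard : P.card = n)
    (hgp : GenPos ↑P) (Δ : ℝ)
    (hΔ : Δ = sSup {d : ℝ | ∃ p ∈ P, ∃ q ∈ P, p ≠ q ∧ d = dist p q} /
              sInf {d : ℝ | ∃ p ∈ P, ∃ q ∈ P, p ≠ q ∧ d = dist p q})
    (M : Set (Sym2 Pt)) (hM : IsPM P M) :
    ∃ k : ℕ, (k : ℝ) ≤ 2 / (2 - Real.sqrt 2) * n * Δ ∧ FlipsToPlane M k := by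
  have hs2 : Real.sqrt 2 < 2 := by
    nlinarith [Real.sq_sqrt (by norm_num : (0:ℝ) ≤ 2), Real.sqrt_nonneg 2]
  by_cases h0 : n = 0
  · subst h0
    have hPempty : P = ∅ := Finset.card_eq_zero.1 hcard
    have hMempty : M = ∅ := by
      ext e
      simp only [Set.mem_empty_iff_false, iff_false]
      intro he
      have := hM.2.1 e he e.out.1 (Sym2.out_fst_mem e)
      rw [hPempty] at this
      exact absurd this (Finset.notMem_empty _)
    refine ⟨0, by norm_num, ?_⟩
    apply flipsToPlane_zero
    intro e he
    rw [hMempty] at he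
    exact absurd he (Set.notMem_empty e)
  · -- n ≥ 2
    have hn2 : 2 ≤ n := by
      rcases hn with ⟨m, hm⟩
      omega
    have hP2 : 1 < P.card := by omega
    obtain ⟨p₀, hp₀, q₀, hq₀, hpq₀⟩ := Finset.one_lt_card.1 hP2
    set S := {d : ℝ | ∃ p ∈ P, ∃ q ∈ P, p ≠ q ∧ d = dist p q} with hS
    have hSne : S.Nonempty := ⟨dist p₀ q₀, p₀, hp₀, q₀, hq₀, hpq₀, rfl⟩
    have hSfin : S.Finite := by
      apply Set.Finite.subset (((P.finite_toSet).prod (P.finite_toSet)).image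
        (fun pq => dist pq.1 pq.2))
      rintro d ⟨p, hp, q, hq, -, rfl⟩
      exact ⟨(p, q), ⟨hp, hq⟩, rfl⟩
    set δ := sInf S with hδdef
    set D := sSup S with hDdef
    have hδmem : δ ∈ S := hSne.csInf_mem hSfin
    have hDmem : D ∈ S := hSne.csSup_mem hSfin
    have hδpos : 0 < δ := by
      obtain ⟨p, -, q, -, hne, heq⟩ := hδmem
      rw [heq]
      exact dist_pos.2 hne
    have hδle : ∀ p ∈ P, ∀ q ∈ P, p ≠ q → δ ≤ dist p q := fun p hp q hq hne =>
      csInf_le hSfin.bddBelow ⟨p, hp, q, hq, hne, rfl⟩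
    have hDge : ∀ p ∈ P, ∀ q ∈ P, p ≠ q → dist p q ≤ D := fun p hp q hq hne =>
      le_csSup hSfin.bddAbove ⟨p, hp, q, hq, hne, rfl⟩
    have hδD : δ ≤ D := le_csSup hSfin.bddAbove hδmem
    have hDpos : 0 < D := lt_of_lt_of_le hδpos hδD
    set F := (pm_finite hM).toFinset with hFdef
    have hFc : (↑F : Set (Sym2 Pt)) = M := Set.Finite.coe_toFinset _
    have hPMF : IsPM P ↑F := by rw [hFc]; exact hM
    set L := ∑ e ∈ F, len e with hLdef
    set c := (2 - Real.sqrt 2) * δ with hcdef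
    have hcpos : 0 < c := mul_pos (by linarith) hδpos
    have hLnonneg : 0 ≤ L := Finset.sum_nonneg fun e _ => len_nonneg e
    have hlenD : ∀ e ∈ F, len e ≤ D := by
      intro e heF
      induction e using Sym2.ind with
      | _ p q =>
        have hnd := hPMF.1 _ (Finset.mem_coe.2 heF)
        have hne : p ≠ q := by
          intro h; exact hnd (by rw [h]; exact Sym2.mk_isDiag_iff.2 rfl)
        have hp : p ∈ P := hPMF.2.1 _ (Finset.mem_coe.2 heF) p (Sym2.mem_mk_left p q)
        have hq : q ∈ P := hPMF.2.1 _ (Finset.mem_coe.2 heF) q (Sym2.mem_mk_right p q)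
        simpa using hDge p hp q hq hne
    have hLle : L ≤ (n : ℝ) * D := by
      calc L ≤ F.card • D := Finset.sum_le_card_nsmul F len D hlenD
        _ = (F.card : ℝ) * D := nsmul_eq_mul _ _
        _ ≤ (n : ℝ) * D := by
            apply mul_le_mul_of_nonneg_right _ hDpos.le
            exact_mod_cast (pm_card hPMF).trans_eq hcard
    refine ⟨⌊L / c⌋₊, ?_, ?_⟩
    · have h1 : (⌊L / c⌋₊ : ℝ) ≤ L / c := Nat.floor_le (div_nonneg hLnonneg hcpos.le)
      have h2 : L / c ≤ (n : ℝ) * D / c :=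
        by gcongr
      have h3 : (n : ℝ) * D / c ≤ 2 / (2 - Real.sqrt 2) * n * Δ := by
        have hne1 : (2 - Real.sqrt 2) ≠ 0 := by linarith
        have hne2 : δ ≠ 0 := ne_of_gt hδpos
        have heq : 2 / (2 - Real.sqrt 2) * n * Δ = 2 * ((n : ℝ) * D / c) := by
          rw [hΔ, hcdef]
          field_simp
        have hnn : 0 ≤ (n : ℝ) * D / c :=
          div_nonneg (mul_nonneg (Nat.cast_nonneg n) hDpos.le) hcpos.le
        rw [heq]
        linarith
      linarith
    · have hb : L < (2 - Real.sqrt 2) * δ * (⌊L / c⌋₊ + 1) := by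
        have := Nat.lt_floor_add_one (L / c)
        have h' : L / c < (⌊L / c⌋₊ : ℝ) + 1 := this
        rw [div_lt_iff₀ hcpos] at h'
        calc L < ((⌊L / c⌋₊ : ℝ) + 1) * c := h'
          _ = (2 - Real.sqrt 2) * δ * (⌊L / c⌋₊ + 1) := by rw [hcdef]; ring
      have := toPlane P δ hδle ⌊L / c⌋₊ F hPMF hb
      rwa [hFc] at this
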